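/- Taking P = 145110 \cdot ( -(36/691)(X^{10} - Y^{10}) + X^2 Y^2 (X^2 - Y^2)^3 ) \in W_{10}^+ in the Gangl–Kaneko–Zagier theorem yields the following relation in the formal double zeta space D_{12}: 22680 Z_{1,11} + 13006 Z_{3,9} - 29145 Z_{5,7} - 35364 Z_{7,5} + 22680 Z_{9,3} = 7560 Z_{2,10} - 2114 Z_{4,8} - (42965/3) Z_{6,6} - 2114 Z_{8,4} + 7560 Z_{10,2} - 1382 Z_{12}. -/
import Mathlib


/-- The Gangl–Kaneko–Zagier relation in `D₁₂` attached to (a multiple of) the even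
period polynomial of the discriminant cusp form `Δ`: in any realization `Z, Zk` of
the double shuffle relations in weight 12,
`22680 Z_{1,11} + 13006 Z_{3,9} - 29145 Z_{5,7} - 35364 Z_{7,5} + 22680 Z_{9,3}
 = 7560 Z_{2,10} - 2114 Z_{4,8} - (42965/3) Z_{6,6} - 2114 Z_{8,4} + 7560 Z_{10,2}
   - 1382 Z_{12}`. -/
theorem delta_relation_weight_twelve
    (Z : ℕ → ℕ → ℚ) (Zk : ℚ)
    (hrel : ∀ r s : ℕ, 1 ≤ r → 1 ≤ s → r + s = 12 →
      Z r s + Z s r + Zk =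
        ∑ p ∈ Finset.Icc 1 11,
          ((Nat.choose (p - 1) (r - 1) + Nat.choose (p - 1) (s - 1) : ℕ) : ℚ) * Z (12 - p) p) :
    22680 * Z 1 11 + 13006 * Z 3 9 - 29145 * Z 5 7 - 35364 * Z 7 5 + 22680 * Z 9 3 =
      7560 * Z 2 10 - 2114 * Z 4 8 - (42965 / 3) * Z 6 6 - 2114 * Z 8 4 + 7560 * Z 10 2
        - 1382 * Zk := by
  have e : Finset.Icc 1 11 = ({1,2,3,4,5,6,7,8,9,10,11} : Finset ℕ) := by decide
  have h1 := hrel 1 11 (by norm_num) (by norm_num) (by norm_num)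
  have h2 := hrel 2 10 (by norm_num) (by norm_num) (by norm_num)
  have h3 := hrel 3 9 (by norm_num) (by norm_num) (by norm_num)
  have h4 := hrel 4 8 (by norm_num) (by norm_num) (by norm_num)
  have h5 := hrel 5 7 (by norm_num) (by norm_num) (by norm_num)
  have h6 := hrel 6 6 (by norm_num) (by norm_num) (by norm_num)
  rw [e] at h1 h2 h3 h4 h5 h6
  simp [Finset.sum_insert, Nat.choose] at h1 h2 h3 h4 h5 h6
  linear_combination 7560 * h1 - 15120 * h2 + (35686/3) * h3 + 4228 * h4 - 21503 * h5 + (42965/3) * h6
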